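/- arXiv:0801.0949 — 6 statements merged into one kernel-verified Lean document; each statement's English description precedes it below -/
import Mathlib

section
/- Let A be an automaton and let φ be a robust live execution property for A such that no state occurs infinitely often along any execution in φ. Let α ∈ execs^ω(A) with α ∉ φ. Then there exists a set G_α ⊆ states(A) such that no state of α is in G_α, and every γ ∈ φ contains infinitely many states in G_α (i.e., α ⊨ □¬G_α and ∀ γ ∈ φ, γ ⊨ □◇G_α). -/
/- Background formalization: automata, executions, traces, complemented-pairs
   liveness conditions, liveness-preserving simulation relations, etc. -/

open Classical

section AutomatonDefs

/-- An automaton over a type `S` of states and a type `Act` of actions. -/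
structure Automaton (S : Type*) (Act : Type*) where
  start : Set S
  start_nonempty : start.Nonempty
  ext : Set Act
  internal : Set Act
  ext_int_disjoint : Disjoint ext internal
  steps : Set (S × Act × S)
  steps_valid : ∀ t ∈ steps, t.2.1 ∈ ext ∪ internal

variable {S SA SB Act : Type*}

/-- A finite execution fragment `s₀ a₁ s₁ ⋯ a_len s_len`; only the values
`st i` for `i ≤ len` and `act i` for `i < len` are relevant
(`act i` is the action between `st i` and `st (i+1)`). -/
structure FinFrag (S : Type*) (Act : Type*) where
  len : ℕ
  st : ℕ → S
  act : ℕ → Act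

def FinFrag.IsFragOf (f : FinFrag S Act) (A : Automaton S Act) : Prop :=
  ∀ i < f.len, (f.st i, f.act i, f.st (i + 1)) ∈ A.steps

def FinFrag.IsExecOf (f : FinFrag S Act) (A : Automaton S Act) : Prop :=
  f.IsFragOf A ∧ f.st 0 ∈ A.start

def FinFrag.fstate (f : FinFrag S Act) : S := f.st 0

def FinFrag.lstate (f : FinFrag S Act) : S := f.st f.len

/-- A finite execution fragment meets a set `X` of states iff some state along
it lies in `X`. -/
def FinFrag.Meets (f : FinFrag S Act) (X : Set S) : Prop := ∃ i ≤ f.len, f.st i ∈ X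

def FinFrag.Prefix (f g : FinFrag S Act) : Prop :=
  f.len ≤ g.len ∧ (∀ i ≤ f.len, f.st i = g.st i) ∧ ∀ i < f.len, f.act i = g.act i

def FinFrag.StrictPrefix (f g : FinFrag S Act) : Prop :=
  f.Prefix g ∧ f.len < g.len

/-- Equality of finite fragments (up to irrelevant values). -/
def FinFrag.Equiv (f g : FinFrag S Act) : Prop :=
  f.len = g.len ∧ (∀ i ≤ f.len, f.st i = g.st i) ∧ ∀ i < f.len, f.act i = g.act i

/-- The trace of a finite list of actions: the sublist of external actions. -/
noncomputable def ltrace (ext : Set Act) (l : List Act) : List Act :=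
  l.filter fun a => decide (a ∈ ext)

/-- The trace of a finite execution fragment. -/
noncomputable def FinFrag.trace (f : FinFrag S Act) (ext : Set Act) : List Act :=
  ltrace ext ((List.range f.len).map f.act)

/-- trace(a) = a if a is external, the empty sequence otherwise. -/
noncomputable def atrace (ext : Set Act) (a : Act) : List Act :=
  if a ∈ ext then [a] else []

/-- The trace of the segment of actions `b_{j+1} ⋯ b_k` (0-indexed:
`act j, …, act (k-1)`) of an execution with actions `act`. -/
noncomputable def segTrace (ext : Set Act) (act : ℕ → Act) (j k : ℕ) : List Act :=
  ltrace ext ((List.range (k - j)).map fun t => act (j + t))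

/-- An infinite execution `s₀ a₁ s₁ a₂ s₂ ⋯` (with `act i` the action between
`st i` and `st (i+1)`). -/
structure InfExec (S : Type*) (Act : Type*) where
  st : ℕ → S
  act : ℕ → Act

def InfExec.IsExecOf (e : InfExec S Act) (A : Automaton S Act) : Prop :=
  e.st 0 ∈ A.start ∧ ∀ i, (e.st i, e.act i, e.st (i + 1)) ∈ A.steps

/-- The prefix `α|_n` of an infinite execution. -/
def InfExec.take (e : InfExec S Act) (n : ℕ) : FinFrag S Act := ⟨n, e.st, e.act⟩

/-- An infinite execution extends a finite one. -/
def InfExec.Extends (e : InfExec S Act) (f : FinFrag S Act) : Prop :=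
  (∀ i ≤ f.len, e.st i = f.st i) ∧ ∀ i < f.len, e.act i = f.act i

/-- `P n` holds for infinitely many `n`. -/
def InfOften (P : ℕ → Prop) : Prop := ∀ n, ∃ m, n ≤ m ∧ P m

/-- A complemented pair `⟨R, G⟩` of sets of states. -/
structure CPair (S : Type*) where
  R : Set S
  G : Set S

/-- `α ⊨ p`: if `α` contains infinitely many states in `p.R` then it contains
infinitely many states in `p.G`. -/
def InfExec.Sat (e : InfExec S Act) (p : CPair S) : Prop :=
  InfOften (fun n => e.st n ∈ p.R) → InfOften fun n => e.st n ∈ p.G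

/-- The live executions of `(A, L)`. -/
def lexecs (A : Automaton S Act) (L : Set (CPair S)) : Set (InfExec S Act) :=
  {e | e.IsExecOf A ∧ ∀ p ∈ L, e.Sat p}

/-- Machine closure: `(A, L)` is a live automaton (equivalently, `L` is a
complemented-pairs liveness condition over `A`). -/
def IsLivenessCondition (A : Automaton S Act) (L : Set (CPair S)) : Prop :=
  ∀ f : FinFrag S Act, f.IsExecOf A → ∃ e ∈ lexecs A L, e.Extends f

/-- The semantic closure of `L` in `A`. -/
def closL (A : Automaton S Act) (L : Set (CPair S)) : Set (CPair S) :=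
  {p | ∀ e ∈ lexecs A L, e.Sat p}

/-- A state is reachable iff it occurs in some execution. -/
def Reachable (A : Automaton S Act) (s : S) : Prop :=
  ∃ f : FinFrag S Act, f.IsExecOf A ∧ ∃ i ≤ f.len, f.st i = s

/-- An invariant is a superset of the reachable states. -/
def IsAutInvariant (A : Automaton S Act) (I : Set S) : Prop :=
  ∀ s, Reachable A s → s ∈ I

/-- `g[s]` for a relation `g ⊆ states(A) × states(B)`. -/
def gImg (g : Set (SA × SB)) (s : SA) : Set SB := {u | (s, u) ∈ g}

def ImageFinite (g : Set (SA × SB)) : Prop := ∀ s, (gImg g s).Finite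

/-- A transition `s →a s'` of `A` is always-silent (w.r.t. `g`, `I_A`, `I_B`). -/
def AlwaysSilent (A : Automaton SA Act) (B : Automaton SB Act)
    (IA : Set SA) (IB : Set SB) (g : Set (SA × SB)) (s : SA) (a : Act) (s' : SA) : Prop :=
  s ∈ IA ∧ ∀ β : FinFrag SB Act, β.IsFragOf B → β.fstate ∈ gImg g s ∩ IB →
    β.lstate ∈ gImg g s' → β.trace B.ext = atrace A.ext a → β.len = 0

/-- A transition `s →a s'` of `A` is sometimes-silent (w.r.t. `g`, `I_A`, `I_B`). -/
def SometimesSilent (A : Automaton SA Act) (B : Automaton SB Act)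
    (IA : Set SA) (IB : Set SB) (g : Set (SA × SB)) (s : SA) (a : Act) (s' : SA) : Prop :=
  s ∈ IA ∧ ∃ β : FinFrag SB Act, β.IsFragOf B ∧ β.fstate ∈ gImg g s ∩ IB ∧
    β.lstate ∈ gImg g s' ∧ β.trace B.ext = atrace A.ext a ∧ β.len = 0

/-- `(g, h)` is a liveness-preserving forward simulation from `(A, L)` to
`(B, M)` with respect to invariants `I_A`, `I_B`. -/
structure IsLPForwardSim (A : Automaton SA Act) (B : Automaton SB Act)
    (L : Set (CPair SA)) (M : Set (CPair SB)) (IA : Set SA) (IB : Set SB)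
    (g : Set (SA × SB)) (h : CPair SB → CPair SA) : Prop where
  h_total : ∀ q ∈ M, h q ∈ closL A L
  start_cond : ∀ s ∈ A.start, ∃ u ∈ B.start, (s, u) ∈ g
  step_cond : ∀ s a s', (s, a, s') ∈ A.steps → s ∈ IA → ∀ u ∈ gImg g s ∩ IB,
    ∃ β : FinFrag SB Act, β.IsFragOf B ∧ β.fstate = u ∧ β.lstate ∈ gImg g s' ∧
      β.trace B.ext = atrace A.ext a ∧
      ∀ q ∈ M, (β.Meets q.R → s ∈ (h q).R ∨ s' ∈ (h q).R) ∧
        ((s ∈ (h q).G ∨ s' ∈ (h q).G) → β.Meets q.G)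
  nonsilent : ∀ e ∈ lexecs A L,
    InfOften fun n => ¬ AlwaysSilent A B IA IB g (e.st n) (e.act n) (e.st (n + 1))

/-- `(g, h)` is a liveness-preserving backward simulation from `(A, L)` to
`(B, M)` with respect to invariants `I_A`, `I_B`. -/
structure IsLPBackwardSim (A : Automaton SA Act) (B : Automaton SB Act)
    (L : Set (CPair SA)) (M : Set (CPair SB)) (IA : Set SA) (IB : Set SB)
    (g : Set (SA × SB)) (h : CPair SB → CPair SA) : Prop where
  h_total : ∀ q ∈ M, h q ∈ closL A L
  nonempty_cond : ∀ s ∈ IA, (gImg g s ∩ IB).Nonempty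
  start_cond : ∀ s ∈ A.start, gImg g s ∩ IB ⊆ B.start
  step_cond : ∀ s a s', (s, a, s') ∈ A.steps → s ∈ IA → ∀ u' ∈ gImg g s' ∩ IB,
    ∃ β : FinFrag SB Act, β.IsFragOf B ∧ β.fstate ∈ gImg g s ∩ IB ∧ β.lstate = u' ∧
      β.trace B.ext = atrace A.ext a ∧
      ∀ q ∈ M, (β.Meets q.R → s ∈ (h q).R ∨ s' ∈ (h q).R) ∧
        ((s ∈ (h q).G ∨ s' ∈ (h q).G) → β.Meets q.G)
  nonsilent : ∀ e ∈ lexecs A L,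
    InfOften fun n => ¬ SometimesSilent A B IA IB g (e.st n) (e.act n) (e.st (n + 1))

/-- Live index mapping from a finite execution `α` of `A` to a finite
execution `β` of `B` with respect to `(R, H)`. -/
structure LiveIndexMapFF (A : Automaton SA Act) (B : Automaton SB Act)
    (R : Set (SA × SB)) (M : Set (CPair SB)) (H : CPair SB → CPair SA)
    (α : FinFrag SA Act) (β : FinFrag SB Act) (m : ℕ → ℕ) : Prop where
  zero : m 0 = 0
  mono : ∀ i j, i ≤ j → j ≤ α.len → m i ≤ m j
  bound : ∀ i ≤ α.len, m i ≤ β.len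
  rel : ∀ i ≤ α.len, (α.st i, β.st (m i)) ∈ R
  tr : ∀ i, 0 < i → i ≤ α.len →
    segTrace B.ext β.act (m (i - 1)) (m i) = atrace A.ext (α.act (i - 1))
  cofinal : ∀ j ≤ β.len, ∃ i ≤ α.len, j ≤ m i
  pairR : ∀ q ∈ M, ∀ i, 0 < i → i ≤ α.len →
    (∃ j, m (i - 1) ≤ j ∧ j ≤ m i ∧ β.st j ∈ q.R) →
      α.st (i - 1) ∈ (H q).R ∨ α.st i ∈ (H q).R
  pairG : ∀ q ∈ M, ∀ i, 0 < i → i ≤ α.len →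
    (α.st (i - 1) ∈ (H q).G ∨ α.st i ∈ (H q).G) →
      ∃ j, m (i - 1) ≤ j ∧ j ≤ m i ∧ β.st j ∈ q.G

/-- Live index mapping from an infinite execution `α` of `A` to an infinite
execution `β` of `B` with respect to `(R, H)`. -/
structure LiveIndexMapII (A : Automaton SA Act) (B : Automaton SB Act)
    (R : Set (SA × SB)) (M : Set (CPair SB)) (H : CPair SB → CPair SA)
    (α : InfExec SA Act) (β : InfExec SB Act) (m : ℕ → ℕ) : Prop where
  zero : m 0 = 0
  mono : Monotone m
  rel : ∀ i, (α.st i, β.st (m i)) ∈ R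
  tr : ∀ i, 0 < i →
    segTrace B.ext β.act (m (i - 1)) (m i) = atrace A.ext (α.act (i - 1))
  cofinal : ∀ j, ∃ i, j ≤ m i
  pairR : ∀ q ∈ M, ∀ i, 0 < i →
    (∃ j, m (i - 1) ≤ j ∧ j ≤ m i ∧ β.st j ∈ q.R) →
      α.st (i - 1) ∈ (H q).R ∨ α.st i ∈ (H q).R
  pairG : ∀ q ∈ M, ∀ i, 0 < i →
    (α.st (i - 1) ∈ (H q).G ∨ α.st i ∈ (H q).G) →
      ∃ j, m (i - 1) ≤ j ∧ j ≤ m i ∧ β.st j ∈ q.G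

/-- The trace of an infinite execution, as a partial sequence: position `n`
holds the `n`-th external action, if it exists. -/
noncomputable def itrace (ext : Set Act) (act : ℕ → Act) : ℕ → Option Act := fun n =>
  if h : ∃ i, act i ∈ ext ∧ {j | j < i ∧ act j ∈ ext}.ncard = n then some (act h.choose)
  else none

/-- The set of traces of a set of infinite executions. -/
noncomputable def tracesOf (ext : Set Act) (Φ : Set (InfExec S Act)) :
    Set (ℕ → Option Act) :=
  (fun e => itrace ext e.act) '' Φ

/-- `r ⪯ w` for a strict order `lt`. -/
def pLe (lt : CPair S → CPair S → Prop) (r w : CPair S) : Prop := lt r w ∨ r = w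

/-- The immediate successors of `r` in `(P, lt)`. -/
def succSet (P : Set (CPair S)) (lt : CPair S → CPair S → Prop) (r : CPair S) :
    Set (CPair S) :=
  {w | w ∈ P ∧ lt r w ∧ ∀ w' ∈ P, pLe lt r w' → lt w' w → r = w'}

/-- No state occurs infinitely often along any execution in `φ`. -/
def NoInfRep (φ : Set (InfExec S Act)) : Prop :=
  ∀ e ∈ φ, ∀ s : S, {n | e.st n = s}.Finite

/-- `γ ⊴ α`: some suffix of `γ` maps into `α` as in the robustness definition. -/
def Subsumes (γ α : InfExec S Act) : Prop :=
  ∃ k : ℕ, ∃ m : ℕ → ℕ, (∀ i, α.st (m i) = γ.st (k + i)) ∧ ∀ i, {j | m j = i}.Finite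

/-- A live execution property for `A`. -/
def IsLiveExecProperty (A : Automaton S Act) (φ : Set (InfExec S Act)) : Prop :=
  (∀ e ∈ φ, e.IsExecOf A) ∧
    ∀ f : FinFrag S Act, f.IsExecOf A → ∃ e ∈ φ, e.Extends f

/-- `φ` is robust for `A`. -/
def Robust (A : Automaton S Act) (φ : Set (InfExec S Act)) : Prop :=
  ∀ γ α : InfExec S Act, γ.IsExecOf A → α.IsExecOf A → Subsumes γ α → γ ∈ φ → α ∈ φ

/-- `A` is a forest automaton: each reachable state is the last state of
exactly one finite execution. -/
def IsForest (A : Automaton S Act) : Prop :=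
  ∀ f g : FinFrag S Act, f.IsExecOf A → g.IsExecOf A → f.lstate = g.lstate → f.Equiv g

/-- A (finite or infinite) execution, with length in `ℕ∞`. -/
structure ExecE (S : Type*) (Act : Type*) where
  len : ℕ∞
  st : ℕ → S
  act : ℕ → Act

def ExecE.IsExecOf (e : ExecE S Act) (A : Automaton S Act) : Prop :=
  e.st 0 ∈ A.start ∧ ∀ i : ℕ, (i : ℕ∞) < e.len → (e.st i, e.act i, e.st (i + 1)) ∈ A.steps

/-- Node of the digraph induced by `α`, `b = (g,h)`, `I_B`, `L`, `M`. -/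
def DNode (IB : Set SB) (g : Set (SA × SB)) (α : ExecE SA Act) (x : SB × ℕ) : Prop :=
  (x.2 : ℕ∞) ≤ α.len ∧ x.1 ∈ gImg g (α.st x.2) ∩ IB

/-- Edge of the digraph induced by `α`, `b = (g,h)`, `I_B`, `L`, `M`. -/
def DEdge (A : Automaton SA Act) (B : Automaton SB Act) (IB : Set SB)
    (g : Set (SA × SB)) (M : Set (CPair SB)) (h : CPair SB → CPair SA)
    (α : ExecE SA Act) (x y : SB × ℕ) : Prop :=
  DNode IB g α x ∧ DNode IB g α y ∧ y.2 = x.2 + 1 ∧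
  ∃ β : FinFrag SB Act, β.IsFragOf B ∧ β.fstate = x.1 ∧ β.lstate = y.1 ∧
    β.trace B.ext = atrace A.ext (α.act x.2) ∧
    ∀ q ∈ M, (β.Meets q.R → α.st x.2 ∈ (h q).R ∨ α.st (x.2 + 1) ∈ (h q).R) ∧
      ((α.st x.2 ∈ (h q).G ∨ α.st (x.2 + 1) ∈ (h q).G) → β.Meets q.G)

/-- Root of the induced digraph: a node with no incoming edge. -/
def DRoot (A : Automaton SA Act) (B : Automaton SB Act) (IB : Set SB)
    (g : Set (SA × SB)) (M : Set (CPair SB)) (h : CPair SB → CPair SA)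
    (α : ExecE SA Act) (x : SB × ℕ) : Prop :=
  DNode IB g α x ∧ ¬ ∃ y, DEdge A B IB g M h α y x

end AutomatonDefs

/-- an execution outside a robust live execution property `φ`
(along whose executions no state repeats infinitely often) can be distinguished
from every execution inside `φ` by a simple Büchi condition. -/
theorem stmt13 {S Act : Type*} (A : Automaton S Act) (φ : Set (InfExec S Act))
    (hφ : IsLiveExecProperty A φ) (hrob : Robust A φ) (hnorep : NoInfRep φ)
    (α : InfExec S Act) (hαe : α.IsExecOf A) (hα : α ∉ φ) :
    ∃ Gα : Set S, (∀ n, α.st n ∉ Gα) ∧ ∀ γ ∈ φ, InfOften (fun n => γ.st n ∈ Gα) := by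
  refine ⟨{s | ∀ n, α.st n ≠ s}, fun n h => h n rfl, fun γ hγ => ?_⟩
  by_contra hno
  unfold InfOften at hno
  push_neg at hno
  obtain ⟨N, hN⟩ := hno
  -- for each i, γ.st (N+i) equals some α.st n
  have hwit : ∀ i : ℕ, ∃ n, α.st n = γ.st (N + i) := by
    intro i
    have := hN (N + i) (Nat.le_add_right _ _)
    simp only [Set.mem_setOf_eq, not_forall, not_not] at this
    exact this
  choose m hm using hwit
  have hsub : Subsumes γ α := by
    refine ⟨N, m, hm, fun i => ?_⟩
    have hfin : {n | γ.st n = α.st i}.Finite := hnorep γ hγ (α.st i)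
    have hsubset : {j | m j = i} ⊆ (fun j => N + j) ⁻¹' {n | γ.st n = α.st i} := by
      intro j hj
      simp only [Set.mem_preimage, Set.mem_setOf_eq]
      rw [← hm j, hj]
    exact (hfin.preimage (fun a _ b _ h => Nat.add_left_cancel h)).subset hsubset
  exact hα (hrob γ α (hφ.1 γ hγ) hαe hsub hγ)
end

section
/- Relative Expressive Completeness of Generalized-Büchi: Let A be an automaton and let φ be an arbitrary robust live execution property for A such that no state occurs infinitely often along any execution in φ. Then there exists a family {G_i}_{i ∈ η} of subsets of states(A), for some index set η, such that φ = { γ ∈ execs^ω(A) : ∀ i ∈ η, γ contains infinitely many states in G_i }. -/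
/- Background formalization: automata, executions, traces, complemented-pairs
   liveness conditions, liveness-preserving simulation relations, etc. -/

open Classical

/-- Relative Expressive Completeness of Generalized-Büchi. -/
theorem stmt14 {S Act : Type*} (A : Automaton S Act) (φ : Set (InfExec S Act))
    (hφ : IsLiveExecProperty A φ) (hrob : Robust A φ) (hnorep : NoInfRep φ) :
    ∃ Gs : Set (Set S),
      φ = {e : InfExec S Act | e.IsExecOf A ∧ ∀ G ∈ Gs, InfOften fun n => e.st n ∈ G} := by
  refine ⟨{G | ∀ e ∈ φ, InfOften fun n => e.st n ∈ G}, ?_⟩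
  ext α
  constructor
  · intro hα
    exact ⟨hφ.1 α hα, fun G hG => hG α hα⟩
  · rintro ⟨hαexec, hα⟩
    have hG : (Set.range α.st)ᶜ ∉ {G | ∀ e ∈ φ, InfOften fun n => e.st n ∈ G} := by
      intro hmem
      obtain ⟨m, -, hm⟩ := hα _ hmem 0
      exact hm ⟨m, rfl⟩
    simp only [Set.mem_setOf_eq, not_forall] at hG
    obtain ⟨γ, hγ, hninf⟩ := hG
    rw [InfOften] at hninf
    push_neg at hninf
    obtain ⟨N, hN⟩ := hninf
    have hmem : ∀ i : ℕ, ∃ n, α.st n = γ.st (N + i) := by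
      intro i
      have := hN (N + i) (Nat.le_add_right _ _)
      simpa [Set.mem_range] using this
    choose m hm using hmem
    have hsub : Subsumes γ α := by
      refine ⟨N, m, hm, fun i => ?_⟩
      have hfin : {n | γ.st n = α.st i}.Finite := by
        simpa [eq_comm] using hnorep γ hγ (α.st i)
      have hfin2 : ((fun j => N + j) ⁻¹' {n | γ.st n = α.st i}).Finite :=
        hfin.preimage (fun a _ b _ h => by omega)
      refine hfin2.subset fun j hj => ?_
      simp only [Set.mem_setOf_eq] at hj
      have := hm j
      simp only [Set.mem_preimage, Set.mem_setOf_eq]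
      rw [← this, hj]
    exact hrob γ α (hφ.1 γ hγ) hαexec hsub hγ
end

section
/- Relative Expressive Completeness of Complemented-pairs: Let A be an automaton and let ψ be an arbitrary robust live trace property for A, where additionally no state occurs infinitely often along any execution in the underlying robust live execution property. Then there exists a complemented-pairs liveness condition L over A such that traces(lexecs(A, L)) = ψ. -/
/- Background formalization: automata, executions, traces, complemented-pairs
   liveness conditions, liveness-preserving simulation relations, etc. -/

open Classical

/-- Relative Expressive Completeness of Complemented-pairs
(trace version). -/
theorem stmt15 {S Act : Type*} (A : Automaton S Act) (ψ : Set (ℕ → Option Act))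
    (hψ : ∃ φ : Set (InfExec S Act),
      IsLiveExecProperty A φ ∧ Robust A φ ∧ NoInfRep φ ∧ ψ = tracesOf A.ext φ) :
    ∃ L : Set (CPair S), IsLivenessCondition A L ∧ tracesOf A.ext (lexecs A L) = ψ := by
  obtain ⟨φ, ⟨hexec, hlive⟩, hrob, hnorep, rfl⟩ := hψ
  have hsub : φ ⊆ lexecs A {p | ∀ e ∈ φ, e.Sat p} :=
    fun e he => ⟨hexec e he, fun p hp => hp e he⟩
  refine ⟨{p | ∀ e ∈ φ, e.Sat p}, ?_, ?_⟩
  · intro f hf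
    obtain ⟨e, heφ, hext⟩ := hlive f hf
    exact ⟨e, hsub heφ, hext⟩
  · have key : lexecs A {p | ∀ e ∈ φ, e.Sat p} = φ := by
      apply Set.Subset.antisymm _ hsub
      intro α hα
      obtain ⟨hαA, hαsat⟩ := hα
      by_cases hex : ∃ e ∈ φ, ∃ k, ∀ i, e.st (k + i) ∈ Set.range α.st
      · obtain ⟨e, he, k, htail⟩ := hex
        refine hrob e α (hexec e he) hαA ?_ he
        choose m hm using htail
        refine ⟨k, m, hm, fun j => ?_⟩
        have hss : {i | m i = j} ⊆ (fun i => k + i) ⁻¹' {n | e.st n = α.st j} := by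
          intro i hi
          simp only [Set.mem_preimage, Set.mem_setOf_eq]
          rw [show e.st (k + i) = α.st (m i) from (hm i).symm, hi]
        refine Set.Finite.subset ?_ hss
        exact (hnorep e he (α.st j)).preimage ((add_right_injective k).injOn)
      · exfalso
        push_neg at hex
        have hp : (⟨Set.univ, (Set.range α.st)ᶜ⟩ : CPair S) ∈
            {p | ∀ e ∈ φ, e.Sat p} := by
          intro e he _ n
          obtain ⟨i, hi⟩ := hex e he n
          exact ⟨n + i, Nat.le_add_right n i, hi⟩
        have := hαsat _ hp (fun n => ⟨n, le_refl n, Set.mem_univ _⟩)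
        obtain ⟨m, _, hm⟩ := this 0
        exact hm ⟨m, rfl⟩
    rw [key]
end

section
/- Let A be a forest automaton. Then for all α, α' ∈ execs^ω(A): α' ≠ α if and only if α' ⊨ pair(α), where pair(α) = ⟨states(α), ∅⟩. -/
/- Background formalization: automata, executions, traces, complemented-pairs
   liveness conditions, liveness-preserving simulation relations, etc. -/

open Classical

/-- in a forest automaton, for infinite executions `α`, `α'`:
`α' ≠ α` iff `α' ⊨ pair(α)`, where `pair(α) = ⟨states(α), ∅⟩`. -/
theorem stmt16 {S Act : Type*} (A : Automaton S Act) (hA : IsForest A)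
    (α α' : InfExec S Act) (hα : α.IsExecOf A) (hα' : α'.IsExecOf A) :
    α' ≠ α ↔ α'.Sat (CPair.mk (Set.range α.st) ∅) := by
  constructor
  · intro hne hinf
    -- derive α' = α, contradiction
    exfalso
    apply hne
    have key : ∀ i : ℕ, α'.st i = α.st i ∧ α'.act i = α.act i := by
      intro i
      obtain ⟨n, hn, k, hk⟩ := hinf (i + 1)
      have hf : (α'.take n).IsExecOf A :=
        ⟨fun j hj => hα'.2 j, hα'.1⟩
      have hg : (α.take k).IsExecOf A :=
        ⟨fun j hj => hα.2 j, hα.1⟩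
      have hls : (α'.take n).lstate = (α.take k).lstate := hk.symm
      have heq := hA _ _ hf hg hls
      obtain ⟨hlen, hst, hact⟩ := heq
      simp only [InfExec.take] at hlen hst hact
      exact ⟨hst i (by omega), hact i (by omega)⟩
    cases α' with
    | mk st' act' =>
      cases α with
      | mk st act =>
        simp only [InfExec.mk.injEq]
        exact ⟨funext fun i => (key i).1, funext fun i => (key i).2⟩
  · intro hsat
    intro heq
    rw [heq] at hsat
    have : InfOften fun n => α.st n ∈ (⟨Set.range α.st, ∅⟩ : CPair S).R := by
      intro n; exact ⟨n, le_rfl, ⟨n, rfl⟩⟩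
    obtain ⟨m, _, hm⟩ := hsat this 0
    exact hm
end

section
/- Expressive Completeness of Complemented-pairs for Forest Automata: Let A be a forest automaton, and let φ be an arbitrary live execution property for A. Then there exists a complemented-pairs liveness condition L over A such that lexecs(A, L) = φ. -/
/- Background formalization: automata, executions, traces, complemented-pairs
   liveness conditions, liveness-preserving simulation relations, etc. -/

open Classical

/-- In a forest automaton, if an execution `e` hits states of execution `γ`
unboundedly often, then `e = γ`. -/
lemma forest_infOften_eq {S Act : Type*} (A : Automaton S Act) (hA : IsForest A)
    (e γ : InfExec S Act) (he : e.IsExecOf A) (hγ : γ.IsExecOf A)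
    (h : InfOften fun n => e.st n ∈ Set.range γ.st) : e = γ := by
  have hpt : ∀ i, e.st i = γ.st i ∧ e.act i = γ.act i := by
    intro i
    obtain ⟨m, hm, k, hk⟩ := h (i + 1)
    have hEq : (e.take m).Equiv (γ.take k) :=
      hA _ _ ⟨fun j _ => he.2 j, he.1⟩ ⟨fun j _ => hγ.2 j, hγ.1⟩ hk.symm
    have hmk : m = k := hEq.1
    have him : i + 1 ≤ m := hm
    exact ⟨hEq.2.1 i (show i ≤ m by omega), hEq.2.2 i (show i < m by omega)⟩
  cases e with
  | mk est eact =>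
    cases γ with
    | mk gst gact =>
      simp only [InfExec.mk.injEq]
      exact ⟨funext fun i => (hpt i).1, funext fun i => (hpt i).2⟩

/-- Expressive Completeness of Complemented-pairs for Forest
Automata (execution version). -/
theorem stmt17 {S Act : Type*} (A : Automaton S Act) (hA : IsForest A)
    (φ : Set (InfExec S Act)) (hφ : IsLiveExecProperty A φ) :
    ∃ L : Set (CPair S), IsLivenessCondition A L ∧ lexecs A L = φ := by
  classical
  set L : Set (CPair S) :=
    {p | ∃ γ : InfExec S Act, γ.IsExecOf A ∧ γ ∉ φ ∧ p = ⟨Set.range γ.st, ∅⟩} with hL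
  have hEq : lexecs A L = φ := by
    ext e
    constructor
    · rintro ⟨heE, hsat⟩
      by_contra hnφ
      have hp : (⟨Set.range e.st, ∅⟩ : CPair S) ∈ L := ⟨e, heE, hnφ, rfl⟩
      have hIO : InfOften fun n => e.st n ∈ (⟨Set.range e.st, (∅ : Set S)⟩ : CPair S).R :=
        fun n => ⟨n, le_refl n, n, rfl⟩
      obtain ⟨m, -, hm⟩ := hsat _ hp hIO 0
      exact hm
    · intro heφ
      refine ⟨hφ.1 e heφ, ?_⟩
      rintro p ⟨γ, hγE, hγnφ, rfl⟩
      intro hIO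
      have : e = γ := forest_infOften_eq A hA e γ (hφ.1 e heφ) hγE hIO
      exact absurd (this ▸ heφ) hγnφ
  refine ⟨L, ?_, hEq⟩
  intro f hf
  obtain ⟨e, heφ, hext⟩ := hφ.2 f hf
  exact ⟨e, hEq ▸ heφ, hext⟩
end

section
/- Expressive Completeness of Complemented-pairs for Forest Automata (trace version): Let A be a forest automaton, and let ψ be an arbitrary live trace property for A. Then there exists a complemented-pairs liveness condition L over A such that traces(lexecs(A, L)) = ψ. -/
/- Background formalization: automata, executions, traces, complemented-pairs
   liveness conditions, liveness-preserving simulation relations, etc. -/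

open Classical

/-- In a forest automaton, an infinite execution sharing infinitely many
states with another infinite execution must equal it. -/
theorem forest_share {S Act : Type*} (A : Automaton S Act) (hA : IsForest A)
    {α e : InfExec S Act} (hα : α.IsExecOf A) (he : e.IsExecOf A)
    (h : InfOften fun n => α.st n ∈ Set.range e.st) : α = e := by
  have key : ∀ n m : ℕ, α.st n = e.st m →
      n = m ∧ (∀ i ≤ n, α.st i = e.st i) ∧ ∀ i < n, α.act i = e.act i := by
    intro n m hnm
    have h1 : (⟨n, α.st, α.act⟩ : FinFrag S Act).IsExecOf A :=
      ⟨fun i _ => hα.2 i, hα.1⟩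
    have h2 : (⟨m, e.st, e.act⟩ : FinFrag S Act).IsExecOf A :=
      ⟨fun i _ => he.2 i, he.1⟩
    exact hA _ _ h1 h2 hnm
  have hst : α.st = e.st := by
    funext i
    obtain ⟨n, hn, ⟨m, hm⟩⟩ := h i
    exact (key n m hm.symm).2.1 i hn
  have hact : α.act = e.act := by
    funext i
    obtain ⟨n, hn, ⟨m, hm⟩⟩ := h (i + 1)
    exact (key n m hm.symm).2.2 i hn
  cases α; cases e; simp_all

/-- Expressive Completeness of Complemented-pairs for Forest
Automata (trace version). -/
theorem stmt18 {S Act : Type*} (A : Automaton S Act) (hA : IsForest A)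
    (ψ : Set (ℕ → Option Act))
    (hψ : ∃ φ : Set (InfExec S Act), IsLiveExecProperty A φ ∧ ψ = tracesOf A.ext φ) :
    ∃ L : Set (CPair S), IsLivenessCondition A L ∧ tracesOf A.ext (lexecs A L) = ψ := by
  obtain ⟨φ, ⟨hφexec, hφext⟩, rfl⟩ := hψ
  refine ⟨{p | ∃ e : InfExec S Act, e.IsExecOf A ∧ e ∉ φ ∧ p = ⟨Set.range e.st, ∅⟩},
    ?_, ?_⟩
  · -- machine closure
    intro f hf
    obtain ⟨e, heφ, hext⟩ := hφext f hf
    refine ⟨e, ⟨hφexec e heφ, ?_⟩, hext⟩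
    rintro p ⟨e', he', hne, rfl⟩ hio
    exact absurd ((forest_share A hA (hφexec e heφ) he' hio) ▸ heφ) hne
  · -- lexecs = φ
    have hset : lexecs A
        {p | ∃ e : InfExec S Act, e.IsExecOf A ∧ e ∉ φ ∧ p = ⟨Set.range e.st, ∅⟩} = φ := by
      ext α
      constructor
      · rintro ⟨hαexec, hsat⟩
        by_contra hαφ
        have hio : InfOften fun n => α.st n ∈ Set.range α.st :=
          fun n => ⟨n, le_refl n, n, rfl⟩
        obtain ⟨m, _, hm⟩ :=
          hsat ⟨Set.range α.st, ∅⟩ ⟨α, hαexec, hαφ, rfl⟩ hio 0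
        exact hm
      · intro hαφ
        refine ⟨hφexec α hαφ, ?_⟩
        rintro p ⟨e', he', hne, rfl⟩ hio
        exact absurd ((forest_share A hA (hφexec α hαφ) he' hio) ▸ hαφ) hne
    rw [hset]
end
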